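/- For every t > 0, (1/(2π)) · ∫_{ℝ²} t·e^{−100|y|²} / (|y|² + t²)^{3/2} dy = 1 − 10·√π · t · e^{100 t²} · erfc(10 t), where erfc(z) = (2/√π)·∫_z^∞ e^{−r²} dr is the complementary error function. -/

import Mathlib

open MeasureTheory Set Real Filter

/-- The complementary error function `erfc(z) = (2/√π) ∫_z^∞ e^{−r²} dr`. -/
noncomputable def erfc (z : ℝ) : ℝ :=
  (2 / Real.sqrt Real.pi) * ∫ r in Set.Ioi z, Real.exp (-r ^ 2)


noncomputable def Ef (z : ℝ) : ℝ := ∫ r in Set.Ioi z, Real.exp (-r ^ 2)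

lemma gauss_integrable : Integrable (fun x : ℝ => Real.exp (-x ^ 2)) := by
  simpa using integrable_exp_neg_mul_sq one_pos

lemma Ef_eq (z : ℝ) : Ef z = Ef 0 - ∫ x in (0:ℝ)..z, Real.exp (-x ^ 2) := by
  have hi := gauss_integrable
  have key : ∀ w : ℝ, Ef w = (∫ x, Real.exp (-x ^ 2)) - ∫ x in Iic w, Real.exp (-x ^ 2) := by
    intro w
    rw [Ef, ← intervalIntegral.integral_Iic_add_Ioi (hi.integrableOn) (hi.integrableOn)]
    ring
  rw [key z, key 0, ← intervalIntegral.integral_Iic_sub_Iic hi.integrableOn hi.integrableOn]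
  ring

lemma Ef_hasDerivAt (z : ℝ) : HasDerivAt Ef (-(Real.exp (-z ^ 2))) z := by
  have h1 : HasDerivAt (fun w => ∫ x in (0:ℝ)..w, Real.exp (-x ^ 2)) (Real.exp (-z ^ 2)) z :=
    intervalIntegral.integral_hasDerivAt_right (gauss_integrable.intervalIntegrable)
      (Continuous.aestronglyMeasurable (by continuity)).stronglyMeasurableAtFilter
      (by fun_prop)
  have h2 : HasDerivAt (fun w => Ef 0 - ∫ x in (0:ℝ)..w, Real.exp (-x ^ 2))
      (-(Real.exp (-z ^ 2))) z := by
    exact ((hasDerivAt_const z (Ef 0)).sub h1).congr_deriv (zero_sub _)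
  exact h2.congr_of_eventuallyEq (Filter.Eventually.of_forall fun w => Ef_eq w)

lemma Ef_nonneg (z : ℝ) : 0 ≤ Ef z :=
  setIntegral_nonneg measurableSet_Ioi fun x _ => (Real.exp_pos _).le

lemma Ef_tendsto : Tendsto Ef atTop (nhds 0) := by
  apply squeeze_zero' (Filter.Eventually.of_forall Ef_nonneg)
    (g := fun z => Real.exp (-z))
  · filter_upwards [Filter.eventually_ge_atTop (1:ℝ)] with z hz
    have hle : Ef z ≤ ∫ x in Ioi z, Real.exp (-x) := by
      apply setIntegral_mono_on gauss_integrable.integrableOn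
        ((exp_neg_integrableOn_Ioi z one_pos).congr_fun (fun x _ => by norm_num) measurableSet_Ioi)
      · exact measurableSet_Ioi
      · intro x hx
        have hx1 : (1:ℝ) ≤ x := hz.trans (le_of_lt hx)
        apply Real.exp_le_exp.mpr
        nlinarith
    simpa only [integral_exp_neg_Ioi] using hle
  · exact Real.tendsto_exp_atBot.comp tendsto_neg_atTop_atBot


lemma key1d (t : ℝ) (ht : 0 < t) :
    ∫ r in Ioi (0:ℝ), r * Real.exp (-100 * r ^ 2) * (r ^ 2 + t ^ 2) ^ (-(3:ℝ)/2) =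
      t⁻¹ - 20 * Real.exp (100 * t ^ 2) * Ef (10 * t) := by
  have hP : ∀ r : ℝ, 0 < r ^ 2 + t ^ 2 := fun r => by positivity
  set G : ℝ → ℝ := fun r =>
    -(Real.exp (-100 * r ^ 2) * (r ^ 2 + t ^ 2) ^ (-(1:ℝ)/2)) +
      20 * Real.exp (100 * t ^ 2) * Ef (10 * (r ^ 2 + t ^ 2) ^ ((1:ℝ)/2)) with hGdef
  have hderiv : ∀ r ∈ Ici (0:ℝ),
      HasDerivAt G (r * Real.exp (-100 * r ^ 2) * (r ^ 2 + t ^ 2) ^ (-(3:ℝ)/2)) r := by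
    intro r _
    have hPr := hP r
    have hq : HasDerivAt (fun r : ℝ => r ^ 2 + t ^ 2) (2 * r) r := by
      simpa using (hasDerivAt_pow 2 r).add_const (t ^ 2)
    have hm : HasDerivAt (fun r : ℝ => -100 * r ^ 2) (-100 * (2 * r)) r := by
      simpa using (hasDerivAt_pow 2 r).const_mul (-100 : ℝ)
    have hA := hm.exp
    have hB : HasDerivAt (fun r : ℝ => (r ^ 2 + t ^ 2) ^ (-(1:ℝ)/2))
        (2 * r * (-(1:ℝ)/2) * (r ^ 2 + t ^ 2) ^ (-(1:ℝ)/2 - 1)) r :=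
      hq.rpow_const (Or.inl hPr.ne')
    have hC : HasDerivAt (fun r : ℝ => 10 * (r ^ 2 + t ^ 2) ^ ((1:ℝ)/2))
        (10 * (2 * r * ((1:ℝ)/2) * (r ^ 2 + t ^ 2) ^ ((1:ℝ)/2 - 1))) r :=
      (hq.rpow_const (Or.inl hPr.ne')).const_mul 10
    have hE := (Ef_hasDerivAt (10 * (r ^ 2 + t ^ 2) ^ ((1:ℝ)/2))).comp r hC
    have hG := ((hA.mul hB).neg).add (hE.const_mul (20 * Real.exp (100 * t ^ 2)))
    refine hG.congr_deriv ?_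
    symm
    have hsq : (10 * (r ^ 2 + t ^ 2) ^ ((1:ℝ)/2)) ^ 2 = 100 * (r ^ 2 + t ^ 2) := by
      rw [mul_pow, ← Real.rpow_natCast ((r ^ 2 + t ^ 2) ^ ((1:ℝ)/2)) 2,
        ← Real.rpow_mul hPr.le]
      norm_num
    rw [hsq, show -(100 * (r ^ 2 + t ^ 2)) = -100 * r ^ 2 + -(100 * t ^ 2) by ring,
      Real.exp_add, show (-(1:ℝ)/2 - 1) = -(3:ℝ)/2 by norm_num,
      show ((1:ℝ)/2 - 1) = -(1:ℝ)/2 by norm_num]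
    have hcb : Real.exp (100 * t ^ 2) * Real.exp (-(100 * t ^ 2)) = 1 := by
      rw [← Real.exp_add]; simp
    linear_combination (200 * r * Real.exp (-100 * r ^ 2) *
      ((r ^ 2 + t ^ 2) ^ (-(1:ℝ)/2))) * hcb
  have hint : IntegrableOn
      (fun r : ℝ => r * Real.exp (-100 * r ^ 2) * (r ^ 2 + t ^ 2) ^ (-(3:ℝ)/2)) (Ioi 0) := by
    have hg : IntegrableOn
        (fun r : ℝ => (t ^ 2) ^ (-(3:ℝ)/2) * (r ^ (1:ℝ) * Real.exp (-100 * r ^ 2))) (Ioi 0) :=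
      (integrableOn_rpow_mul_exp_neg_mul_sq (by norm_num) (by norm_num : (-1:ℝ) < 1)).const_mul _
    apply Integrable.mono' hg
    · apply Continuous.aestronglyMeasurable
      exact (continuous_id.mul (Real.continuous_exp.comp (by continuity))).mul
        (((continuous_pow 2).add continuous_const).rpow_const fun x => Or.inl (hP x).ne')
    · filter_upwards [ae_restrict_mem measurableSet_Ioi] with r hr
      have hr0 : (0:ℝ) < r := hr
      have hple : (r ^ 2 + t ^ 2) ^ (-(3:ℝ)/2) ≤ (t ^ 2) ^ (-(3:ℝ)/2) :=
        Real.rpow_le_rpow_of_nonpos (by positivity) (by nlinarith) (by norm_num)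
      rw [Real.norm_eq_abs, abs_of_nonneg (by positivity)]
      calc r * Real.exp (-100 * r ^ 2) * (r ^ 2 + t ^ 2) ^ (-(3:ℝ)/2)
          ≤ r * Real.exp (-100 * r ^ 2) * (t ^ 2) ^ (-(3:ℝ)/2) :=
            mul_le_mul_of_nonneg_left hple (by positivity)
        _ = (t ^ 2) ^ (-(3:ℝ)/2) * (r ^ (1:ℝ) * Real.exp (-100 * r ^ 2)) := by
            rw [Real.rpow_one]; ring
  have hPtop : Tendsto (fun r : ℝ => r ^ 2 + t ^ 2) atTop atTop :=
    tendsto_atTop_add_const_right _ _ (tendsto_pow_atTop two_ne_zero)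
  have h1 : Tendsto (fun r : ℝ => Real.exp (-100 * r ^ 2)) atTop (nhds 0) := by
    have h100 : Tendsto (fun r : ℝ => (100:ℝ) * r ^ 2) atTop atTop :=
      (tendsto_pow_atTop two_ne_zero).const_mul_atTop (by norm_num)
    have := Real.tendsto_exp_atBot.comp (tendsto_neg_atTop_atBot.comp h100)
    refine this.congr fun r => by simp [Function.comp]
  have h2 : Tendsto (fun r : ℝ => (r ^ 2 + t ^ 2) ^ (-(1:ℝ)/2)) atTop (nhds 0) := by
    have := (tendsto_rpow_neg_atTop (by norm_num : (0:ℝ) < 1/2)).comp hPtop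
    refine this.congr fun r => by rw [Function.comp_apply, neg_div]
  have h3 : Tendsto (fun r : ℝ => Ef (10 * (r ^ 2 + t ^ 2) ^ ((1:ℝ)/2))) atTop (nhds 0) :=
    Ef_tendsto.comp (((tendsto_rpow_atTop (by norm_num : (0:ℝ) < 1/2)).comp
      hPtop).const_mul_atTop (by norm_num))
  have hG0 : Tendsto G atTop (nhds 0) := by
    have h := ((h1.mul h2).neg).add (h3.const_mul (20 * Real.exp (100 * t ^ 2)))
    rw [show (0:ℝ) = -(0 * 0) + 20 * Real.exp (100 * t ^ 2) * 0 by ring]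
    exact h
  have hFTC := integral_Ioi_of_hasDerivAt_of_tendsto' hderiv hint hG0
  rw [hFTC]
  have e1 : ((0:ℝ) ^ 2 + t ^ 2) = t ^ 2 := by ring
  have e2 : (t ^ 2 : ℝ) ^ (-(1:ℝ)/2) = t⁻¹ := by
    rw [← Real.rpow_natCast t 2, ← Real.rpow_mul ht.le]
    norm_num [Real.rpow_neg_one]
  have e3 : (t ^ 2 : ℝ) ^ ((1:ℝ)/2) = t := by
    rw [← Real.rpow_natCast t 2, ← Real.rpow_mul ht.le]
    norm_num
  rw [hGdef]
  simp only [e1, e2, e3]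
  norm_num
  ring

theorem fractional_heat_gaussian_center_value (t : ℝ) (ht : 0 < t) :
    (1 / (2 * Real.pi)) *
      ∫ y : EuclideanSpace ℝ (Fin 2),
        t * Real.exp (-100 * ‖y‖ ^ 2) / (‖y‖ ^ 2 + t ^ 2) ^ ((3 : ℝ) / 2) =
    1 - 10 * Real.sqrt Real.pi * t * Real.exp (100 * t ^ 2) * erfc (10 * t) := by
  have hπ := Real.pi_pos
  have vball : (volume (Metric.ball (0 : EuclideanSpace ℝ (Fin 2)) 1)).toReal = Real.pi := by
    rw [EuclideanSpace.volume_ball]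
    simp only [Fintype.card_fin]
    rw [show ((2:ℕ):ℝ)/2 + 1 = 1 + 1 by norm_num, Real.Gamma_add_one one_ne_zero,
      Real.Gamma_one, Real.sq_sqrt hπ.le]
    simp [hπ.le]
  have hrad := integral_fun_norm_addHaar (volume : Measure (EuclideanSpace ℝ (Fin 2)))
      (fun s : ℝ => t * Real.exp (-100 * s ^ 2) / (s ^ 2 + t ^ 2) ^ ((3:ℝ)/2))
  simp only [finrank_euclideanSpace_fin, smul_eq_mul, nsmul_eq_mul, pow_one,
    Nat.cast_ofNat, measureReal_def, vball] at hrad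
  simp only [show (2-1:ℕ) = 1 from rfl, pow_one] at hrad
  rw [hrad]
  have hinner : ∫ y in Ioi (0:ℝ),
      y * (t * Real.exp (-100 * y ^ 2) / (y ^ 2 + t ^ 2) ^ ((3:ℝ)/2)) =
      t * (t⁻¹ - 20 * Real.exp (100 * t ^ 2) * Ef (10 * t)) := by
    rw [← key1d t ht, ← integral_const_mul]
    refine setIntegral_congr_fun measurableSet_Ioi fun y _ => ?_
    have hPy : (0:ℝ) < y ^ 2 + t ^ 2 := by positivity
    have hne : (y ^ 2 + t ^ 2) ^ ((3:ℝ)/2) ≠ 0 := by positivity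
    rw [show (-(3:ℝ)/2) = -((3:ℝ)/2) by norm_num, Real.rpow_neg hPy.le]
    field_simp
  rw [hinner]
  have hs : Real.sqrt Real.pi ≠ 0 := (Real.sqrt_pos.mpr hπ).ne'
  rw [show erfc (10 * t) = (2 / Real.sqrt Real.pi) * Ef (10 * t) from rfl]
  field_simp
  ring
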